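/- For all real (or complex) z with |z| < 1, the identity z·arcsin(z)/√(1−z²) = Σ_{m=1}^∞ (2z)^{2m} / (binom(2m,m) · 2m) holds. -/

import Mathlib

open Real

namespace ArcsinCB

noncomputable def c (n : ℕ) : ℝ :=
  4 ^ n * (Nat.factorial n : ℝ) ^ 2 / (Nat.factorial (2 * n + 1) : ℝ)

lemma c_pos (n : ℕ) : 0 < c n := by
  unfold c; positivity

lemma c_zero : c 0 = 1 := by simp [c]

lemma c_rec (n : ℕ) : (2 * (n : ℝ) + 3) * c (n + 1) = (2 * n + 2) * c n := by
  have h1 : (Nat.factorial (n + 1) : ℝ) = (n + 1) * Nat.factorial n := by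
    rw [Nat.factorial_succ]; push_cast; ring
  have h2 : (Nat.factorial (2 * (n + 1) + 1) : ℝ) =
      (2 * n + 3) * ((2 * n + 2) * Nat.factorial (2 * n + 1)) := by
    have e : 2 * (n + 1) + 1 = (2 * n + 1) + 1 + 1 := by omega
    rw [e, Nat.factorial_succ, Nat.factorial_succ]; push_cast; ring
  have hf : (Nat.factorial (2 * n + 1) : ℝ) ≠ 0 := by
    exact_mod_cast (Nat.factorial_pos _).ne'
  unfold c
  rw [h1, h2]
  field_simp
  ring

lemma c_le_one (n : ℕ) : c n ≤ 1 := by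
  induction n with
  | zero => simp [c_zero]
  | succ n ih =>
    have h := c_rec n
    have h3 : (0:ℝ) < 2 * n + 3 := by positivity
    have hcc : c (n + 1) = (2 * n + 2) / (2 * n + 3) * c n := by
      field_simp; linarith [h]
    rw [hcc]
    have hc := (c_pos n).le
    have hq : (2 * (n:ℝ) + 2) / (2 * n + 3) ≤ 1 := by
      rw [div_le_one h3]; linarith
    nlinarith

lemma summable_u {r : ℝ} (hr : |r| < 1) :
    Summable (fun n : ℕ => (2 * (n:ℝ) + 1) * r ^ (2 * n)) := by
  have hr2 : ‖r ^ 2‖ < 1 := by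
    rw [Real.norm_eq_abs, abs_pow]
    calc |r| ^ 2 ≤ |r| := by nlinarith [abs_nonneg r]
    _ < 1 := hr
  have h1 : Summable (fun n : ℕ => (n:ℝ) * (r ^ 2) ^ n) := by
    simpa using summable_pow_mul_geometric_of_norm_lt_one 1 hr2
  have h2 : Summable (fun n : ℕ => (r ^ 2) ^ n) :=
    summable_geometric_of_norm_lt_one hr2
  have := (h1.mul_left 2).add h2
  refine this.congr fun n => ?_
  rw [pow_mul]
  ring

lemma term_eq (m : ℕ) (z : ℝ) :
    (2 * z) ^ (2 * (m + 1)) / ((Nat.choose (2 * (m + 1)) (m + 1) : ℝ) * (2 * (m + 1))) =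
      z * (c m * z ^ (2 * m + 1)) := by
  have key := Nat.choose_mul_factorial_mul_factorial (show m + 1 ≤ 2 * (m + 1) by omega)
  have h : 2 * (m + 1) - (m + 1) = m + 1 := by omega
  rw [h] at key
  have hch : ((Nat.choose (2 * (m + 1)) (m + 1) : ℕ) : ℝ) * (Nat.factorial (m + 1) : ℝ) ^ 2
      = (Nat.factorial (2 * (m + 1)) : ℝ) := by
    rw [sq, ← mul_assoc]; exact_mod_cast key
  have h1 : (Nat.factorial (m + 1) : ℝ) = (m + 1) * Nat.factorial m := by
    rw [Nat.factorial_succ]; push_cast; ring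
  have h2 : (Nat.factorial (2 * (m + 1)) : ℝ) = (2 * m + 2) * Nat.factorial (2 * m + 1) := by
    have e : 2 * (m + 1) = (2 * m + 1) + 1 := by omega
    rw [e, Nat.factorial_succ]; push_cast; ring
  have hm : (Nat.factorial m : ℝ) ≠ 0 := by exact_mod_cast (Nat.factorial_pos _).ne'
  have hB : (Nat.factorial (2 * m + 1) : ℝ) ≠ 0 := by exact_mod_cast (Nat.factorial_pos _).ne'
  have hC : ((Nat.choose (2 * (m + 1)) (m + 1) : ℕ) : ℝ) ≠ 0 := by
    exact_mod_cast (Nat.choose_pos (show m + 1 ≤ 2 * (m + 1) by omega)).ne'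
  rw [h1, h2] at hch
  have hz1 : (2 * z) ^ (2 * (m + 1)) = 4 ^ (m + 1) * z ^ (2 * (m + 1)) := by
    rw [mul_pow, pow_mul]; norm_num
  have hz2 : z * z ^ (2 * m + 1) = z ^ (2 * (m + 1)) := by
    rw [← pow_succ']; congr 1
  have hz3 : z * (c m * z ^ (2 * m + 1)) = c m * z ^ (2 * (m + 1)) := by
    rw [mul_comm z, mul_assoc, mul_comm (z ^ (2 * m + 1)) z, hz2]
  rw [hz1, hz3, c, div_mul_eq_mul_div,
    div_eq_div_iff (by positivity) (by positivity)]
  have hm1 : ((m:ℝ) + 1) ≠ 0 := by positivity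
  have hch3 : ((Nat.choose (2 * (m + 1)) (m + 1) : ℕ) : ℝ) * (Nat.factorial m : ℝ) ^ 2 * ((m:ℝ) + 1)
      = 2 * (Nat.factorial (2 * m + 1) : ℝ) := by
    apply mul_left_cancel₀ hm1
    linear_combination hch
  linear_combination (-(2 * 4 ^ m * z ^ (2 * (m + 1)))) * hch3

noncomputable def G (x : ℝ) : ℝ := ∑' n : ℕ, c n * x ^ (2 * n + 1)

noncomputable def T (x : ℝ) : ℝ := ∑' n : ℕ, (2 * (n:ℝ) + 1) * c n * x ^ (2 * n)

lemma even_pow_nonneg (y : ℝ) (n : ℕ) : 0 ≤ y ^ (2 * n) := by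
  rw [pow_mul]; positivity

lemma S1 {y : ℝ} (hy : |y| < 1) :
    Summable (fun n : ℕ => (2 * (n:ℝ) + 1) * c n * y ^ (2 * n)) := by
  refine (summable_u hy).of_nonneg_of_le (fun n => ?_) (fun n => ?_)
  · exact mul_nonneg (mul_nonneg (by positivity) (c_pos n).le) (even_pow_nonneg y n)
  · nlinarith [c_le_one n, c_pos n, even_pow_nonneg y n,
      mul_le_mul_of_nonneg_right (c_le_one n) (even_pow_nonneg y n)]

lemma S0 {y : ℝ} (hy : |y| < 1) :
    Summable (fun n : ℕ => c n * y ^ (2 * n)) := by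
  refine (summable_u hy).of_nonneg_of_le (fun n => ?_) (fun n => ?_)
  · exact mul_nonneg (c_pos n).le (even_pow_nonneg y n)
  · calc c n * y ^ (2 * n) ≤ 1 * y ^ (2 * n) :=
        mul_le_mul_of_nonneg_right (c_le_one n) (even_pow_nonneg y n)
    _ ≤ (2 * (n:ℝ) + 1) * y ^ (2 * n) :=
        mul_le_mul_of_nonneg_right (by linarith [Nat.cast_nonneg (α := ℝ) n]) (even_pow_nonneg y n)

lemma ode {y : ℝ} (hy : |y| < 1) : (1 - y ^ 2) * T y = 1 + y * G y := by
  have hS1 := S1 hy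
  have hS0 := S0 hy
  have hS4 : Summable (fun n : ℕ => (2 * (n:ℝ) + 1) * c n * y ^ (2 * n + 2)) := by
    refine (hS1.mul_right (y ^ 2)).congr fun n => ?_
    rw [pow_add]; ring
  have hS5 : Summable (fun n : ℕ => c n * y ^ (2 * n + 2)) := by
    refine (hS0.mul_right (y ^ 2)).congr fun n => ?_
    rw [pow_add]; ring
  have step1 : T y = 1 + ∑' n : ℕ, (2 * (n:ℝ) + 2) * c n * y ^ (2 * n + 2) := by
    unfold T
    rw [Summable.tsum_eq_zero_add hS1]
    congr 1
    · norm_num [c_zero]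
    · apply tsum_congr; intro n
      have hrec := c_rec n
      have e : 2 * (n + 1) = 2 * n + 2 := by ring
      rw [e]
      push_cast
      linear_combination y ^ (2 * n + 2) * hrec
  have hyT : y ^ 2 * T y = ∑' n : ℕ, (2 * (n:ℝ) + 1) * c n * y ^ (2 * n + 2) := by
    unfold T
    rw [← tsum_mul_left]
    apply tsum_congr; intro n
    rw [pow_add]; ring
  have hyG : y * G y = ∑' n : ℕ, c n * y ^ (2 * n + 2) := by
    unfold G
    rw [← tsum_mul_left]
    apply tsum_congr; intro n
    rw [pow_add, pow_add]; ring
  have hsub : (∑' n : ℕ, (2 * (n:ℝ) + 2) * c n * y ^ (2 * n + 2))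
      - (∑' n : ℕ, (2 * (n:ℝ) + 1) * c n * y ^ (2 * n + 2))
      = ∑' n : ℕ, c n * y ^ (2 * n + 2) := by
    have hSA : Summable (fun n : ℕ => (2 * (n:ℝ) + 2) * c n * y ^ (2 * n + 2)) := by
      refine (hS4.add hS5).congr fun n => ?_
      ring
    rw [← Summable.tsum_sub hSA hS4]
    apply tsum_congr; intro n
    ring
  have expand : (1 - y ^ 2) * T y = T y - y ^ 2 * T y := by ring
  rw [expand, hyT, step1, hyG]
  linarith [hsub]

lemma key {x : ℝ} (hx : |x| < 1) : Real.arcsin x = Real.sqrt (1 - x ^ 2) * G x := by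
  set r : ℝ := (|x| + 1) / 2 with hrdef
  have hr0 : 0 < r := by positivity
  have hr1 : r < 1 := by rw [hrdef]; linarith
  have hxr : |x| < r := by rw [hrdef]; linarith
  set t : Set ℝ := Set.Ioo (-r) r with htdef
  have hmem : ∀ y ∈ t, |y| < r := fun y hy => abs_lt.mpr ⟨hy.1, hy.2⟩
  have hx_t : x ∈ t := by
    have := abs_lt.mp hxr; exact ⟨this.1, this.2⟩
  have h0_t : (0:ℝ) ∈ t := ⟨by linarith, hr0⟩
  have hderiv_each : ∀ (n : ℕ) (y : ℝ),
      HasDerivAt (fun w : ℝ => c n * w ^ (2 * n + 1)) ((2 * (n:ℝ) + 1) * c n * y ^ (2 * n)) y := by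
    intro n y
    have h := (hasDerivAt_pow (2 * n + 1) y).const_mul (c n)
    refine h.congr_deriv ?_
    have e : 2 * n + 1 - 1 = 2 * n := by omega
    rw [e]
    push_cast
    ring
  have hu : Summable (fun n : ℕ => (2 * (n:ℝ) + 1) * r ^ (2 * n)) := by
    apply summable_u
    rw [abs_of_pos hr0]; exact hr1
  have hbound : ∀ (n : ℕ) (y : ℝ), y ∈ t →
      ‖(2 * (n:ℝ) + 1) * c n * y ^ (2 * n)‖ ≤ (2 * (n:ℝ) + 1) * r ^ (2 * n) := by
    intro n y hy
    rw [Real.norm_eq_abs, abs_mul, abs_mul, abs_pow]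
    rw [abs_of_pos (by positivity : (0:ℝ) < 2 * (n:ℝ) + 1), abs_of_pos (c_pos n)]
    have hp : |y| ^ (2 * n) ≤ r ^ (2 * n) := pow_le_pow_left₀ (abs_nonneg y) (hmem y hy).le _
    have hpn : (0:ℝ) ≤ |y| ^ (2 * n) := by positivity
    nlinarith [c_le_one n, c_pos n,
      mul_le_mul_of_nonneg_right (c_le_one n) hpn]
  have hsum0 : Summable (fun n : ℕ => c n * (0:ℝ) ^ (2 * n + 1)) := by
    have he : (fun n : ℕ => c n * (0:ℝ) ^ (2 * n + 1)) = fun _ => (0:ℝ) := by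
      funext n
      rw [zero_pow (by omega : 2 * n + 1 ≠ 0)]
      ring
    rw [he]; exact summable_zero
  have hG' : ∀ y ∈ t, HasDerivAt G (T y) y := by
    intro y hy
    unfold G T
    exact hasDerivAt_tsum_of_isPreconnected hu isOpen_Ioo (convex_Ioo _ _).isPreconnected
      (fun n w _ => hderiv_each n w) hbound h0_t hsum0 hy
  set H : ℝ → ℝ := fun w => Real.arcsin w - Real.sqrt (1 - w ^ 2) * G w with hHdef
  have hH : ∀ y ∈ t, HasDerivAt H 0 y := by
    intro y hy
    have hy1 : |y| < 1 := lt_trans (hmem y hy) hr1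
    have hpos : 0 < 1 - y ^ 2 := by nlinarith [abs_nonneg y, sq_abs y]
    have hsnz : Real.sqrt (1 - y ^ 2) ≠ 0 := (Real.sqrt_pos.mpr hpos).ne'
    have hyl := abs_lt.mp hy1
    have ha : HasDerivAt Real.arcsin (1 / Real.sqrt (1 - y ^ 2)) y :=
      Real.hasDerivAt_arcsin hyl.1.ne' hyl.2.ne
    have hq : HasDerivAt (fun w : ℝ => 1 - w ^ 2) (-(2 * y)) y := by
      have h := (hasDerivAt_pow 2 y).const_sub 1
      refine h.congr_deriv ?_
      push_cast; ring
    have hsq : HasDerivAt (fun w : ℝ => Real.sqrt (1 - w ^ 2))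
        (-(2 * y) / (2 * Real.sqrt (1 - y ^ 2))) y := hq.sqrt hpos.ne'
    have hprod := hsq.mul (hG' y hy)
    have hfull := ha.sub hprod
    have hzero : 1 / Real.sqrt (1 - y ^ 2) -
        (-(2 * y) / (2 * Real.sqrt (1 - y ^ 2)) * G y + Real.sqrt (1 - y ^ 2) * T y) = 0 := by
      set s : ℝ := Real.sqrt (1 - y ^ 2) with hsdef
      have hs2 : s ^ 2 = 1 - y ^ 2 := Real.sq_sqrt hpos.le
      have hODE := ode hy1
      rw [← hs2] at hODE
      field_simp
      linear_combination (-1) * hODE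
    rw [hzero] at hfull
    exact hfull
  set a : ℝ := min x 0 with hadef
  set b : ℝ := max x 0 with hbdef
  have hab_sub : Set.Icc a b ⊆ t := by
    intro w hw
    constructor
    · have : -r < a := by
        rw [hadef]
        rcases le_total x 0 with h | h
        · rw [min_eq_left h]; exact (abs_lt.mp hxr).1
        · rw [min_eq_right h]; linarith
      linarith [hw.1]
    · have : b < r := by
        rw [hbdef]
        rcases le_total x 0 with h | h
        · rw [max_eq_right h]; exact hr0
        · rw [max_eq_left h]; exact (abs_lt.mp hxr).2
      linarith [hw.2]
  have hcont : ContinuousOn H (Set.Icc a b) := fun w hw =>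
    ((hH w (hab_sub hw)).continuousAt).continuousWithinAt
  have hder : ∀ w ∈ Set.Ico a b, HasDerivWithinAt H 0 (Set.Ici w) w := fun w hw =>
    (hH w (hab_sub ⟨hw.1, hw.2.le⟩)).hasDerivWithinAt
  have hconst := constant_of_has_deriv_right_zero hcont hder
  have hxmem : x ∈ Set.Icc a b := ⟨min_le_left _ _, le_max_left _ _⟩
  have h0mem : (0:ℝ) ∈ Set.Icc a b := ⟨min_le_right _ _, le_max_right _ _⟩
  have hHx : H x = H 0 := by rw [hconst x hxmem, hconst 0 h0mem]
  have hG0 : G 0 = 0 := by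
    unfold G
    have he : (fun n : ℕ => c n * (0:ℝ) ^ (2 * n + 1)) = fun _ => (0:ℝ) := by
      funext n
      rw [zero_pow (by omega : 2 * n + 1 ≠ 0)]
      ring
    rw [he, tsum_zero]
  have hH0 : H 0 = 0 := by
    rw [hHdef]
    simp [hG0]
  rw [hH0] at hHx
  have := sub_eq_zero.mp hHx
  linarith [this]

end ArcsinCB

theorem arcsin_central_binomial_series (z : ℝ) (hz : |z| < 1) :
    z * Real.arcsin z / Real.sqrt (1 - z ^ 2) =
      ∑' m : ℕ, (2 * z) ^ (2 * (m + 1)) /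
        ((Nat.choose (2 * (m + 1)) (m + 1) : ℝ) * (2 * (m + 1))) := by
  have hpos : 0 < 1 - z ^ 2 := by nlinarith [abs_nonneg z, sq_abs z]
  have hsnz : Real.sqrt (1 - z ^ 2) ≠ 0 := (Real.sqrt_pos.mpr hpos).ne'
  have harc := ArcsinCB.key hz
  have hRHS : (∑' m : ℕ, (2 * z) ^ (2 * (m + 1)) /
      ((Nat.choose (2 * (m + 1)) (m + 1) : ℝ) * (2 * (m + 1))))
      = z * ArcsinCB.G z := by
    rw [show z * ArcsinCB.G z = ∑' m : ℕ, z * (ArcsinCB.c m * z ^ (2 * m + 1)) by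
      rw [tsum_mul_left]; rfl]
    exact tsum_congr fun m => ArcsinCB.term_eq m z
  rw [hRHS, harc]
  rw [mul_comm (Real.sqrt (1 - z ^ 2)), ← mul_assoc, mul_div_assoc, div_self hsnz, mul_one]
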